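/- For every Tychonoff space X, the covering dimension of X (defined via finite functionally open covers) equals the covering dimension of its Stone–Čech compactification βX. -/

import Mathlib

open Set Topology

universe u v w

/-- An abstract simplicial complex on a vertex set `V`. -/
structure SimpComplex (V : Type v) where
  faces : Set (Finset V)
  down_closed : ∀ s ∈ faces, ∀ t, t ⊆ s → t.Nonempty → t ∈ faces

/-- The geometric realization of a simplicial complex with the metric (ℓ¹) topology,
realized inside the Banach space `ℓ¹(V)`. -/
def SimpComplex.space {V : Type v} (K : SimpComplex V) : Set (lp (fun _ : V => ℝ) 1) :=
  {f | ∃ s ∈ K.faces, (∀ v : V, (f : ∀ _ : V, ℝ) v ≠ 0 → v ∈ s) ∧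
    (∀ v : V, 0 ≤ (f : ∀ _ : V, ℝ) v) ∧ ∑ v ∈ s, (f : ∀ _ : V, ℝ) v = 1}

/-- `Z` is an absolute extensor of `X`: every continuous map from a closed subset of `X`
into `Z` extends continuously over all of `X`. -/
def IsAE (Z X : Type*) [TopologicalSpace Z] [TopologicalSpace X] : Prop :=
  ∀ Y : Set X, IsClosed Y → ∀ f : C(Y, Z), ∃ g : C(X, Z), ∀ y : Y, g y = f y

/-- `Z` is an absolute neighborhood extensor of `X`. -/
def IsANE (Z X : Type*) [TopologicalSpace Z] [TopologicalSpace X] : Prop :=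
  ∀ Y : Set X, IsClosed Y → ∀ f : C(Y, Z),
    ∃ U : Set X, IsOpen U ∧ Y ⊆ U ∧ ∃ g : C(U, Z),
      ∀ (y : Y) (h : (y : X) ∈ U), g ⟨y, h⟩ = f y

/-- A space is countably compact if every countable open cover has a finite subcover. -/
def CountablyCompact (X : Type*) [TopologicalSpace X] : Prop :=
  ∀ 𝒰 : ℕ → Set X, (∀ n, IsOpen (𝒰 n)) → (⋃ n, 𝒰 n) = univ →
    ∃ t : Finset ℕ, (⋃ n ∈ t, 𝒰 n) = univ

/-- A set is functionally open if it is the cozero set of a real-valued continuous function. -/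
def FunctionallyOpen {X : Type*} [TopologicalSpace X] (U : Set X) : Prop :=
  ∃ φ : C(X, ℝ), U = φ ⁻¹' ({0}ᶜ)

/-- `CovDimLE X n` : every finite functionally open cover of `X` has a finite functionally
open refinement of order at most `n + 1` (any `n + 2` distinct members meet emptily). -/
def CovDimLE (X : Type*) [TopologicalSpace X] (n : ℕ) : Prop :=
  ∀ 𝒰 : Finset (Set X), (∀ U ∈ 𝒰, FunctionallyOpen U) → ⋃₀ (𝒰 : Set (Set X)) = univ →
    ∃ 𝒱 : Finset (Set X), (∀ V ∈ 𝒱, FunctionallyOpen V) ∧ ⋃₀ (𝒱 : Set (Set X)) = univ ∧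
      (∀ V ∈ 𝒱, ∃ U ∈ 𝒰, V ⊆ U) ∧
      ∀ 𝒲 : Finset (Set X), 𝒲 ⊆ 𝒱 → n + 1 < 𝒲.card → ⋂₀ (𝒲 : Set (Set X)) = ∅

/-- The covering dimension of `X` as an extended natural number (`⊤` if no finite bound). -/
noncomputable def covDim (X : Type*) [TopologicalSpace X] : ℕ∞ :=
  sInf ((↑) '' {n : ℕ | CovDimLE X n})

/-- The Stone–Čech remainder `βX \ X`. -/
def StoneCechRemainder (X : Type*) [TopologicalSpace X] : Set (StoneCech X) :=
  (range (stoneCechUnit : X → StoneCech X))ᶜ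

section CovDimHelpers
variable {X : Type*} [TopologicalSpace X]



open Classical in
/-- canonical `[0,1]`-valued witness function for a set. -/
noncomputable def mFun (U : Set X) : X → ℝ :=
  fun y => if h : FunctionallyOpen U then min |h.choose y| 1 else 0

open Classical in
lemma mFun_continuous (U : Set X) : Continuous (mFun U) := by
  unfold mFun
  split_ifs with h
  · exact (h.choose.continuous.abs).min continuous_const
  · exact continuous_const

open Classical in
lemma mFun_nonneg (U : Set X) (y : X) : 0 ≤ mFun U y := by
  unfold mFun; split_ifs with h
  · exact le_min (abs_nonneg _) zero_le_one
  · exact le_rfl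

open Classical in
lemma mFun_le_one (U : Set X) (y : X) : mFun U y ≤ 1 := by
  unfold mFun; split_ifs with h
  · exact min_le_right _ _
  · exact zero_le_one

open Classical in
lemma mFun_ne_zero_iff {U : Set X} (h : FunctionallyOpen U) (y : X) :
    mFun U y ≠ 0 ↔ y ∈ U := by
  unfold mFun
  rw [dif_pos h]
  have hspec := h.choose_spec
  constructor
  · intro hne
    have : h.choose y ≠ 0 := by
      intro h0
      simp [h0] at hne
    rw [hspec]; simpa using this
  · intro hy
    have : h.choose y ≠ 0 := by
      rw [hspec] at hy; simpa using hy
    have : 0 < min |h.choose y| 1 := lt_min (abs_pos.2 this) one_pos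
    exact this.ne'

lemma functionallyOpen_preimage {Y : Type*} [TopologicalSpace Y] {f : X → Y}
    (hf : Continuous f) {U : Set Y} (h : FunctionallyOpen U) :
    FunctionallyOpen (f ⁻¹' U) := by
  obtain ⟨φ, rfl⟩ := h
  exact ⟨⟨fun x => φ (f x), φ.continuous.comp hf⟩, rfl⟩

lemma functionallyOpen_lt {g : X → ℝ} (hg : Continuous g) (c : ℝ) :
    FunctionallyOpen {y | c < g y} := by
  refine ⟨⟨fun y => max (g y - c) 0, (hg.sub continuous_const).max continuous_const⟩, ?_⟩
  ext y
  simp only [mem_setOf_eq, ContinuousMap.coe_mk, mem_preimage, mem_compl_iff,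
    mem_singleton_iff]
  constructor
  · intro hy
    have : 0 < g y - c := by linarith
    simp [max_eq_left this.le, this.ne']
  · intro hy
    by_contra hc
    push_neg at hc
    exact hy (by simp [max_eq_right (by linarith : g y - c ≤ 0)])

lemma exists_stoneCech_extension {f : X → ℝ} (hf : Continuous f)
    (h01 : ∀ x, f x ∈ Icc (0:ℝ) 1) :
    ∃ F : StoneCech X → ℝ, Continuous F ∧ (∀ x, F (stoneCechUnit x) = f x) := by
  have hf' : Continuous (fun x => (⟨f x, h01 x⟩ : Icc (0:ℝ) 1)) := hf.subtype_mk _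
  refine ⟨fun p => ((stoneCechExtend hf' p : Icc (0:ℝ) 1) : ℝ),
    continuous_subtype_val.comp (continuous_stoneCechExtend hf'), fun x => ?_⟩
  have := congrFun (stoneCechExtend_extends hf') x
  simpa using congrArg Subtype.val this

lemma stoneCech_eq_zero {F : StoneCech X → ℝ} (hF : Continuous F)
    (h : ∀ x, F (stoneCechUnit x) = 0) (p : StoneCech X) : F p = 0 := by
  have : F = fun _ => (0:ℝ) :=
    stoneCech_hom_ext hF continuous_const (funext h)
  exact congrFun this p

lemma cozero_subset_closure {F : StoneCech X → ℝ} (hF : Continuous F) :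
    F ⁻¹' ({0}ᶜ) ⊆
      closure (stoneCechUnit '' (stoneCechUnit ⁻¹' (F ⁻¹' ({0}ᶜ : Set ℝ)))) := by
  have hopen : IsOpen (F ⁻¹' ({0}ᶜ : Set ℝ)) := isOpen_compl_singleton.preimage hF
  have hd : Dense (range (stoneCechUnit : X → StoneCech X)) := denseRange_stoneCechUnit
  have := hd.open_subset_closure_inter hopen
  rwa [image_preimage_eq_inter_range]

/-- Given a finite functionally open cover of `X`, produce continuous functions on the
Stone–Čech compactification summing to `1`, whose cozero sets trace back to the cover. -/
lemma partition_extend (𝒱 : Finset (Set X)) (hfo : ∀ V ∈ 𝒱, FunctionallyOpen V)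
    (hcov : ⋃₀ (𝒱 : Set (Set X)) = univ) :
    ∃ F : Set X → StoneCech X → ℝ,
      (∀ V, Continuous (F V)) ∧
      (∀ p, ∑ V ∈ 𝒱, F V p = 1) ∧
      (∀ V ∈ 𝒱, stoneCechUnit ⁻¹' (F V ⁻¹' ({0}ᶜ : Set ℝ)) = V) := by
  set T : X → ℝ := fun x => ∑ V ∈ 𝒱, mFun V x with hT
  have hTc : Continuous T := continuous_finset_sum _ fun V _ => mFun_continuous V
  have hTpos : ∀ x, 0 < T x := by
    intro x
    have hx : x ∈ ⋃₀ (𝒱 : Set (Set X)) := by rw [hcov]; trivial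
    obtain ⟨V, hV, hxV⟩ := hx
    refine Finset.sum_pos' (fun W _ => mFun_nonneg W x) ⟨V, hV, ?_⟩
    exact lt_of_le_of_ne (mFun_nonneg V x) (Ne.symm ((mFun_ne_zero_iff (hfo V hV) x).2 hxV))
  set f : Set X → X → ℝ := fun V x => min (mFun V x / T x) 1 with hf
  have hfc : ∀ V, Continuous (f V) :=
    fun V => ((mFun_continuous V).div hTc fun x => (hTpos x).ne').min continuous_const
  have hf01 : ∀ V x, f V x ∈ Icc (0:ℝ) 1 :=
    fun V x => ⟨le_min (div_nonneg (mFun_nonneg V x) (hTpos x).le) zero_le_one,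
      min_le_right _ _⟩
  have hfeq : ∀ V ∈ 𝒱, ∀ x, f V x = mFun V x / T x := by
    intro V hV x
    refine min_eq_left ((div_le_one (hTpos x)).2 ?_)
    exact Finset.single_le_sum (fun W _ => mFun_nonneg W x) hV
  have hfsum : ∀ x, ∑ V ∈ 𝒱, f V x = 1 := by
    intro x
    rw [Finset.sum_congr rfl fun V hV => hfeq V hV x, ← Finset.sum_div]
    exact div_self (hTpos x).ne'
  have hfzero : ∀ V ∈ 𝒱, ∀ x, f V x ≠ 0 ↔ x ∈ V := by
    intro V hV x
    rw [hfeq V hV x, div_ne_zero_iff]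
    constructor
    · intro h; exact (mFun_ne_zero_iff (hfo V hV) x).1 h.1
    · intro h; exact ⟨(mFun_ne_zero_iff (hfo V hV) x).2 h, (hTpos x).ne'⟩
  have hext : ∀ V : Set X, ∃ F : StoneCech X → ℝ, Continuous F ∧
      (∀ x, F (stoneCechUnit x) = f V x) :=
    fun V => exists_stoneCech_extension (hfc V) (hf01 V)
  choose F hFc hFu using hext
  refine ⟨F, hFc, ?_, ?_⟩
  · intro p
    have : (fun p => ∑ V ∈ 𝒱, F V p) = fun _ => (1:ℝ) := by
      refine stoneCech_hom_ext (continuous_finset_sum _ fun V _ => hFc V)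
        continuous_const (funext fun x => ?_)
      simp only [Function.comp_apply]
      rw [Finset.sum_congr rfl fun V _ => hFu V x]
      exact hfsum x
    exact congrFun this p
  · intro V hV
    ext x
    simp only [mem_preimage, mem_compl_iff, mem_singleton_iff, hFu V x]
    exact hfzero V hV x


open Classical in
lemma covDimLE_of_stoneCech {n : ℕ} (h : CovDimLE (StoneCech X) n) : CovDimLE X n := by
  intro 𝒰 h𝒰 hcov
  obtain ⟨F, hFc, hFsum, hFpre⟩ := partition_extend 𝒰 h𝒰 hcov
  set ℬ : Finset (Set (StoneCech X)) := 𝒰.image fun U => F U ⁻¹' ({0}ᶜ : Set ℝ) with hℬ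
  have hℬfo : ∀ B ∈ ℬ, FunctionallyOpen B := by
    intro B hB
    obtain ⟨U, _, rfl⟩ := Finset.mem_image.1 hB
    exact ⟨⟨F U, hFc U⟩, rfl⟩
  have hℬcov : ⋃₀ (ℬ : Set (Set (StoneCech X))) = univ := by
    refine eq_univ_of_forall fun p => ?_
    have h1 : ∑ U ∈ 𝒰, F U p = 1 := hFsum p
    have : ∃ U ∈ 𝒰, F U p ≠ 0 := by
      by_contra hc
      push_neg at hc
      rw [Finset.sum_eq_zero hc] at h1
      exact zero_ne_one h1
    obtain ⟨U, hU, hne⟩ := this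
    exact ⟨F U ⁻¹' ({0}ᶜ), by simpa [hℬ] using Finset.mem_image_of_mem _ hU, hne⟩
  obtain ⟨𝒱β, h𝒱fo, h𝒱cov, h𝒱ref, h𝒱ord⟩ := h ℬ hℬfo hℬcov
  refine ⟨𝒱β.image fun V => stoneCechUnit ⁻¹' V, ?_, ?_, ?_, ?_⟩
  · intro W hW
    obtain ⟨V, hV, rfl⟩ := Finset.mem_image.1 hW
    exact functionallyOpen_preimage continuous_stoneCechUnit (h𝒱fo V hV)
  · refine eq_univ_of_forall fun x => ?_
    have : stoneCechUnit x ∈ ⋃₀ (𝒱β : Set (Set (StoneCech X))) := by rw [h𝒱cov]; trivial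
    obtain ⟨V, hV, hxV⟩ := this
    exact ⟨stoneCechUnit ⁻¹' V, by simpa using Finset.mem_image_of_mem _ hV, hxV⟩
  · intro W hW
    obtain ⟨V, hV, rfl⟩ := Finset.mem_image.1 hW
    obtain ⟨B, hB, hVB⟩ := h𝒱ref V hV
    obtain ⟨U, hU, rfl⟩ := Finset.mem_image.1 hB
    refine ⟨U, hU, ?_⟩
    rw [← hFpre U hU]
    exact preimage_mono hVB
  · intro 𝒲 h𝒲sub h𝒲card
    set s : Set X → Set (StoneCech X) := fun W =>
      if h : ∃ V ∈ 𝒱β, stoneCechUnit ⁻¹' V = W then h.choose else ∅ with hs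
    have hsspec : ∀ W ∈ 𝒲, s W ∈ 𝒱β ∧ stoneCechUnit ⁻¹' (s W) = W := by
      intro W hW
      have hex : ∃ V ∈ 𝒱β, stoneCechUnit ⁻¹' V = W := by
        obtain ⟨V, hV, rfl⟩ := Finset.mem_image.1 (h𝒲sub hW)
        exact ⟨V, hV, rfl⟩
      rw [hs]
      simp only [dif_pos hex]
      exact ⟨hex.choose_spec.1, hex.choose_spec.2⟩
    have hinj : Set.InjOn s 𝒲 := by
      intro W1 h1 W2 h2 heq
      rw [← (hsspec W1 h1).2, ← (hsspec W2 h2).2, heq]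
    set 𝒲' := 𝒲.image s with h𝒲'
    have hsub' : 𝒲' ⊆ 𝒱β := by
      intro V hV
      obtain ⟨W, hW, rfl⟩ := Finset.mem_image.1 hV
      exact (hsspec W hW).1
    have hcard' : n + 1 < 𝒲'.card := by
      rwa [h𝒲', Finset.card_image_of_injOn hinj]
    have hempty : ⋂₀ (𝒲' : Set (Set (StoneCech X))) = ∅ := h𝒱ord 𝒲' hsub' hcard'
    refine eq_empty_of_forall_notMem fun x hx => ?_
    have hmem : stoneCechUnit x ∈ ⋂₀ (𝒲' : Set (Set (StoneCech X))) := by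
      rintro V hV
      obtain ⟨W, hW, rfl⟩ := Finset.mem_image.1 (by exact_mod_cast hV)
      have := hx W (by exact_mod_cast hW)
      rw [← (hsspec W hW).2] at this
      exact this
    rw [hempty] at hmem
    exact hmem

open Classical in
lemma covDimLE_stoneCech_of {n : ℕ} (h : CovDimLE X n) : CovDimLE (StoneCech X) n := by
  intro 𝒰 h𝒰 hcov
  by_cases hne : Nonempty (StoneCech X)
  case neg =>
    have hE : IsEmpty (StoneCech X) := not_nonempty_iff.1 hne
    refine ⟨∅, by simp, ?_, by simp, ?_⟩
    · simp [Set.eq_empty_of_isEmpty (univ : Set (StoneCech X))]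
    · intro 𝒲 hsub hcard
      have : 𝒲 = ∅ := Finset.subset_empty.1 hsub
      simp [this] at hcard
  case pos =>
    -- positive lower bound for the "sum of witnesses" function
    set S : StoneCech X → ℝ := fun p => ∑ U ∈ 𝒰, mFun U p with hS
    have hSc : Continuous S := continuous_finset_sum _ fun U _ => mFun_continuous U
    have hSpos : ∀ p, 0 < S p := by
      intro p
      have hp : p ∈ ⋃₀ (𝒰 : Set (Set (StoneCech X))) := by rw [hcov]; trivial
      obtain ⟨U, hU, hpU⟩ := hp
      refine Finset.sum_pos' (fun W _ => mFun_nonneg W p) ⟨U, hU, ?_⟩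
      exact lt_of_le_of_ne (mFun_nonneg U p) (Ne.symm ((mFun_ne_zero_iff (h𝒰 U hU) p).2 hpU))
    obtain ⟨p₀, -, hp₀⟩ := isCompact_univ.exists_isMinOn univ_nonempty hSc.continuousOn
    set ε : ℝ := S p₀ with hε
    have hεpos : 0 < ε := hSpos p₀
    have hεle : ∀ p, ε ≤ S p := fun p => hp₀ (mem_univ p)
    have h𝒰ne : 𝒰.Nonempty := by
      obtain ⟨p⟩ := hne
      have hp : p ∈ ⋃₀ (𝒰 : Set (Set (StoneCech X))) := by rw [hcov]; trivial
      obtain ⟨U, hU, -⟩ := hp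
      exact ⟨U, hU⟩
    set N : ℕ := 𝒰.card with hN
    have hNpos : 0 < (N:ℝ) := by
      have := Finset.card_pos.2 h𝒰ne
      exact_mod_cast this
    set c : ℝ := ε / (2 * N) with hc
    have hcpos : 0 < c := div_pos hεpos (by positivity)
    set W : Set (StoneCech X) → Set (StoneCech X) := fun U => {p | c < mFun U p} with hW
    have hWcov : ∀ p, ∃ U ∈ 𝒰, p ∈ W U := by
      intro p
      by_contra hcon
      push_neg at hcon
      have hle : ∀ U ∈ 𝒰, mFun U p ≤ c := by
        intro U hU
        have := hcon U hU
        simpa [hW] using this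
      have : S p ≤ N * c := by
        calc S p ≤ ∑ _U ∈ 𝒰, c := Finset.sum_le_sum hle
        _ = N * c := by rw [Finset.sum_const, nsmul_eq_mul]
      have hNc : (N:ℝ) * c = ε / 2 := by
        rw [hc]; field_simp
      rw [hNc] at this
      linarith [hεle p]
    have hWcl : ∀ U ∈ 𝒰, closure (W U) ⊆ U := by
      intro U hU
      have h1 : closure (W U) ⊆ {p | c ≤ mFun U p} := by
        have := closure_lt_subset_le (continuous_const (y := c)) (mFun_continuous U)
        exact this
      refine h1.trans fun p hp => ?_
      have : mFun U p ≠ 0 := by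
        have : c ≤ mFun U p := hp
        linarith
      exact (mFun_ne_zero_iff (h𝒰 U hU) p).1 this
    -- trace cover on X
    set 𝒯 : Finset (Set X) := 𝒰.image fun U => stoneCechUnit ⁻¹' (W U) with h𝒯
    have h𝒯fo : ∀ T ∈ 𝒯, FunctionallyOpen T := by
      intro T hT
      obtain ⟨U, hU, rfl⟩ := Finset.mem_image.1 hT
      exact functionallyOpen_preimage continuous_stoneCechUnit
        (functionallyOpen_lt (mFun_continuous U) c)
    have h𝒯cov : ⋃₀ (𝒯 : Set (Set X)) = univ := by
      refine eq_univ_of_forall fun x => ?_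
      obtain ⟨U, hU, hxU⟩ := hWcov (stoneCechUnit x)
      exact ⟨stoneCechUnit ⁻¹' (W U), by simpa [h𝒯] using Finset.mem_image_of_mem _ hU, hxU⟩
    obtain ⟨𝒱, h𝒱fo, h𝒱cov, h𝒱ref, h𝒱ord⟩ := h 𝒯 h𝒯fo h𝒯cov
    obtain ⟨F, hFc, hFsum, hFpre⟩ := partition_extend 𝒱 h𝒱fo h𝒱cov
    refine ⟨𝒱.image fun V => F V ⁻¹' ({0}ᶜ : Set ℝ), ?_, ?_, ?_, ?_⟩
    · intro B hB
      obtain ⟨V, hV, rfl⟩ := Finset.mem_image.1 hB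
      exact ⟨⟨F V, hFc V⟩, rfl⟩
    · refine eq_univ_of_forall fun p => ?_
      have h1 : ∑ V ∈ 𝒱, F V p = 1 := hFsum p
      have : ∃ V ∈ 𝒱, F V p ≠ 0 := by
        by_contra hcon
        push_neg at hcon
        rw [Finset.sum_eq_zero hcon] at h1
        exact zero_ne_one h1
      obtain ⟨V, hV, hne'⟩ := this
      exact ⟨F V ⁻¹' ({0}ᶜ), by simpa using Finset.mem_image_of_mem _ hV, hne'⟩
    · intro B hB
      obtain ⟨V, hV, rfl⟩ := Finset.mem_image.1 hB
      obtain ⟨T, hT, hVT⟩ := h𝒱ref V hV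
      obtain ⟨U, hU, rfl⟩ := Finset.mem_image.1 hT
      refine ⟨U, hU, ?_⟩
      calc F V ⁻¹' ({0}ᶜ : Set ℝ)
          ⊆ closure (stoneCechUnit '' (stoneCechUnit ⁻¹' (F V ⁻¹' ({0}ᶜ : Set ℝ)))) :=
            cozero_subset_closure (hFc V)
        _ = closure (stoneCechUnit '' V) := by rw [hFpre V hV]
        _ ⊆ closure (W U) := by
            refine closure_mono ?_
            refine (image_mono hVT).trans ?_
            exact image_preimage_subset _ _
        _ ⊆ U := hWcl U hU
    · intro 𝒲 h𝒲sub h𝒲card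
      set s : Set (StoneCech X) → Set X := fun B =>
        if hb : ∃ V ∈ 𝒱, F V ⁻¹' ({0}ᶜ : Set ℝ) = B then hb.choose else ∅ with hs
      have hsspec : ∀ B ∈ 𝒲, s B ∈ 𝒱 ∧ F (s B) ⁻¹' ({0}ᶜ : Set ℝ) = B := by
        intro B hB
        have hex : ∃ V ∈ 𝒱, F V ⁻¹' ({0}ᶜ : Set ℝ) = B := by
          obtain ⟨V, hV, rfl⟩ := Finset.mem_image.1 (h𝒲sub hB)
          exact ⟨V, hV, rfl⟩
        rw [hs]
        simp only [dif_pos hex]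
        exact ⟨hex.choose_spec.1, hex.choose_spec.2⟩
      have hinj : Set.InjOn s 𝒲 := by
        intro B1 h1 B2 h2 heq
        rw [← (hsspec B1 h1).2, ← (hsspec B2 h2).2, heq]
      set 𝒲' := 𝒲.image s with h𝒲'
      have hsub' : 𝒲' ⊆ 𝒱 := by
        intro V hV
        obtain ⟨B, hB, rfl⟩ := Finset.mem_image.1 hV
        exact (hsspec B hB).1
      have hcard' : n + 1 < 𝒲'.card := by
        rwa [h𝒲', Finset.card_image_of_injOn hinj]
      have hempty : ⋂₀ (𝒲' : Set (Set X)) = ∅ := h𝒱ord 𝒲' hsub' hcard'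
      refine eq_empty_of_forall_notMem fun p hp => ?_
      set P : StoneCech X → ℝ := fun q => ∏ B ∈ 𝒲, F (s B) q with hP
      have hPc : Continuous P := continuous_finset_prod _ fun B _ => hFc (s B)
      have hPz : ∀ x, P (stoneCechUnit x) = 0 := by
        intro x
        have hx : x ∉ ⋂₀ (𝒲' : Set (Set X)) := by rw [hempty]; exact notMem_empty x
        have : ∃ V ∈ 𝒲', x ∉ V := by
          by_contra hcon
          push_neg at hcon
          exact hx fun V hV => hcon V (by exact_mod_cast hV)
        obtain ⟨V, hV', hxV⟩ := this
        obtain ⟨B, hB, rfl⟩ := Finset.mem_image.1 hV'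
        refine Finset.prod_eq_zero hB ?_
        by_contra hne'
        apply hxV
        have := (hsspec B hB).1
        have hmem : x ∈ stoneCechUnit ⁻¹' (F (s B) ⁻¹' ({0}ᶜ : Set ℝ)) := hne'
        rwa [hFpre (s B) this] at hmem
      have hPp : P p = 0 := stoneCech_eq_zero hPc hPz p
      have hPne : P p ≠ 0 := by
        refine Finset.prod_ne_zero_iff.2 fun B hB => ?_
        have := hp B (by exact_mod_cast hB)
        rw [← (hsspec B hB).2] at this
        exact this
      exact hPne hPp
end CovDimHelpers

/-- For every Tychonoff space `X`, the covering dimension of `X` equals the covering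
dimension of its Stone–Čech compactification `βX`. -/
theorem covDim_eq_covDim_stoneCech (X : Type u) [TopologicalSpace X] [T35Space X] :
    covDim X = covDim (StoneCech X) := by
  have hset : {n : ℕ | CovDimLE X n} = {n : ℕ | CovDimLE (StoneCech X) n} :=
    Set.ext fun n => ⟨fun h => covDimLE_stoneCech_of h, fun h => covDimLE_of_stoneCech h⟩
  unfold covDim
  rw [hset]
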